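/- Under the stated hypotheses, there exists a constant C > 0, depending only on N, C₃ and the diameter of Ω, such that for every index 1 ≤ i ≤ N, sup_{x ∈ Ω} |Σ_{j=1}^{N} A_ij(x) ∂u/∂x_j(x)| ≤ C. -/
import Mathlib

open MeasureTheory Set

noncomputable def pdN (N : ℕ) (i : Fin N) (f : EuclideanSpace ℝ (Fin N) → ℝ)
    (x : EuclideanSpace ℝ (Fin N)) : ℝ :=
  fderiv ℝ f x (EuclideanSpace.single i 1)

lemma aux_mvt_14 (f : ℝ → ℝ) (a b C3 : ℝ) (hab : a ≤ b)
    (hd : ∀ t ∈ Icc a b, DifferentiableAt ℝ f t)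
    (hd' : ∀ t ∈ Icc a b, -C3 ≤ deriv f t) :
    -C3 * (b - a) ≤ f b - f a := by
  set F : ℝ → ℝ := fun t => f t + C3 * t with hF
  have hFd : ∀ t ∈ Icc a b, HasDerivAt F (deriv f t + C3) t := by
    intro t ht
    exact ((hd t ht).hasDerivAt).add (by simpa using (hasDerivAt_id t).const_mul C3)
  have hmono : MonotoneOn F (Icc a b) := by
    apply monotoneOn_of_deriv_nonneg (convex_Icc a b)
    · intro t ht
      exact ((hFd t ht).differentiableAt).continuousAt.continuousWithinAt
    · intro t ht
      rw [interior_Icc] at ht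
      exact ((hFd t (Ioo_subset_Icc_self ht)).differentiableAt).differentiableWithinAt
    · intro t ht
      rw [interior_Icc] at ht
      rw [(hFd t (Ioo_subset_Icc_self ht)).deriv]
      linarith [hd' t (Ioo_subset_Icc_self ht)]
  have := hmono (left_mem_Icc.mpr hab) (right_mem_Icc.mpr hab) hab
  simp only [hF] at this
  linarith

theorem statement_14 (N : ℕ) (hN : 1 ≤ N) (C3 D : ℝ)
    (hC3 : 0 < C3) (hD : 0 < D) :
    ∃ C > 0,
      ∀ (Ω : Set (EuclideanSpace ℝ (Fin N))), IsOpen Ω → Ω.Nonempty → Convex ℝ Ω →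
        Bornology.IsBounded Ω → Metric.diam Ω ≤ D →
        ∀ (C1 C2 : ℝ), 0 < C1 → 0 < C2 →
        ∀ (A : Fin N → Fin N → EuclideanSpace ℝ (Fin N) → ℝ)
          (u : EuclideanSpace ℝ (Fin N) → ℝ),
          (∀ i j : Fin N, Measurable (A i j)) →
          (∀ i j : Fin N, ∀ x ∈ Ω, |A i j x| ≤ C1) →
          (∀ x ∈ Ω, |(Matrix.of fun i j : Fin N => A i j x).det|⁻¹ ≤ C2) →
          ContDiffOn ℝ 2 u Ω →
          HasCompactSupport u →
          tsupport u ⊆ Ω →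
          (∀ i : Fin N, ∀ x ∈ Ω,
            DifferentiableAt ℝ (fun t : ℝ => ∑ j : Fin N,
                A i j (x + t • EuclideanSpace.single i (1 : ℝ)) *
                  pdN N j u (x + t • EuclideanSpace.single i (1 : ℝ))) 0) →
          (∀ i : Fin N, ∀ x ∈ Ω,
            -deriv (fun t : ℝ => ∑ j : Fin N,
                A i j (x + t • EuclideanSpace.single i (1 : ℝ)) *
                  pdN N j u (x + t • EuclideanSpace.single i (1 : ℝ))) 0 ≤ C3) →
          ∀ i : Fin N, ∀ x ∈ Ω, |∑ j : Fin N, A i j x * pdN N j u x| ≤ C := by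
  refine ⟨C3 * D, by positivity, ?_⟩
  intro Ω hΩo hΩne hΩconv hΩbdd hΩdiam C1 C2 hC1 hC2 A u hAmeas hAbd hdet hu hcs hsupp
    hdiffh hineq i x hx
  set e : EuclideanSpace ℝ (Fin N) := EuclideanSpace.single i (1 : ℝ) with he_def
  have he : ‖e‖ = 1 := by simp [he_def]
  set g : ℝ → ℝ := fun t => ∑ j : Fin N, A i j (x + t • e) * pdN N j u (x + t • e) with hg
  have hg0 : g 0 = ∑ j : Fin N, A i j x * pdN N j u x := by simp [hg]
  rw [← hg0]
  -- the key differentiability/derivative bound along the line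
  have hkey : ∀ s : ℝ, x + s • e ∈ Ω → DifferentiableAt ℝ g s ∧ -C3 ≤ deriv g s := by
    intro s hs
    have h1 := hdiffh i _ hs
    have h2 := hineq i _ hs
    have heq : (fun t : ℝ => ∑ j : Fin N,
        A i j ((x + s • e) + t • e) * pdN N j u ((x + s • e) + t • e))
        = fun t => g (s + t) := by
      funext t
      have : (x + s • e) + t • e = x + (s + t) • e := by
        rw [add_smul]; abel
      simp [hg, this]
    rw [heq] at h1 h2
    have hgeq : g = fun t => (fun r => g (s + r)) (t - s) := by
      funext t; simp
    have h1' : DifferentiableAt ℝ (fun r => g (s + r)) (s - s) := by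
      rw [sub_self]; exact h1
    have hdg : DifferentiableAt ℝ g s := by
      have hinner : DifferentiableAt ℝ (fun t : ℝ => t - s) s :=
        differentiableAt_id.sub_const s
      have hc : DifferentiableAt ℝ ((fun r => g (s + r)) ∘ (fun t : ℝ => t - s)) s :=
        DifferentiableAt.comp s
          (by show DifferentiableAt ℝ (fun r => g (s + r)) (s - s); rw [sub_self]; exact h1)
          hinner
      have heq2 : ((fun r => g (s + r)) ∘ (fun t => t - s)) = g := by
        funext t
        simp only [Function.comp]
        congr 1
        ring
      rwa [heq2] at hc
    refine ⟨hdg, ?_⟩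
    have hder : deriv (fun r => g (s + r)) 0 = deriv g s := by
      simpa using deriv_comp_const_add g s 0
    rw [← hder]
    linarith
  -- g vanishes off tsupport u
  have hvanish : ∀ t : ℝ, x + t • e ∉ tsupport u → g t = 0 := by
    intro t ht
    have hz : fderiv ℝ u (x + t • e) = 0 := by
      by_contra h
      exact ht (support_fderiv_subset ℝ (Function.mem_support.mpr h))
    have : ∀ j : Fin N, pdN N j u (x + t • e) = 0 := by
      intro j; simp [pdN, hz]
    simp [hg, this]
  -- the trace of Ω along the line
  set I : Set ℝ := {t : ℝ | x + t • e ∈ Ω} with hI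
  have hI0 : (0 : ℝ) ∈ I := by simpa [hI] using hx
  have hlinecont : Continuous fun t : ℝ => x + t • e :=
    continuous_const.add (continuous_id.smul continuous_const)
  have hIopen : IsOpen I := hΩo.preimage hlinecont
  have hIbd : ∀ t ∈ I, |t| ≤ D := by
    intro t ht
    have hdist : dist (x + t • e) x = |t| := by
      rw [dist_eq_norm]
      have : (x + t • e) - x = t • e := by abel
      rw [this, norm_smul, he]
      simp
    calc |t| = dist (x + t • e) x := hdist.symm
      _ ≤ Metric.diam Ω := Metric.dist_le_diam_of_mem hΩbdd ht hx
      _ ≤ D := hΩdiam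
  have hIconv : Convex ℝ I := by
    intro t1 h1 t2 h2 a b ha hb hab
    have hmem := hΩconv h1 h2 ha hb hab
    have heq : a • (x + t1 • e) + b • (x + t2 • e) = x + (a • t1 + b • t2) • e := by
      have : a • (x + t1 • e) + b • (x + t2 • e) = (a + b) • x + (a * t1 + b * t2) • e := by
        module
      rw [this, hab, one_smul]; rfl
    rw [heq] at hmem
    exact hmem
  have hIcc : ∀ a ∈ I, ∀ b ∈ I, Icc a b ⊆ I := fun a ha b hb => hIconv.ordConnected.out ha hb
  by_cases hxs : x ∈ tsupport u
  case neg =>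
    have : g 0 = 0 := hvanish 0 (by simpa using hxs)
    rw [this]
    simp only [abs_zero]
    positivity
  case pos =>
  -- the set of parameters hitting the support
  set K : Set ℝ := {t : ℝ | x + t • e ∈ tsupport u} with hK
  have hK0 : (0 : ℝ) ∈ K := by simpa [hK] using hxs
  have hKI : K ⊆ I := fun t ht => hsupp ht
  have hKcl : IsClosed K := (isClosed_tsupport u).preimage hlinecont
  have hKsub : K ⊆ Icc (-D) D := fun t ht => abs_le.mp (hIbd t (hKI ht))
  have hKcp : IsCompact K := isCompact_Icc.of_isClosed_subset hKcl hKsub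
  have hKne : K.Nonempty := ⟨0, hK0⟩
  -- upper direction
  have hupper : g 0 ≤ C3 * D := by
    obtain ⟨m, hmK, hmub⟩ := hKcp.exists_isGreatest hKne
    have hm0 : 0 ≤ m := hmub hK0
    obtain ⟨ε, hε, hball⟩ := Metric.isOpen_iff.mp hIopen m (hKI hmK)
    obtain ⟨b, hb⟩ : ∃ b : ℝ, b = m + ε / 2 := ⟨_, rfl⟩
    have hbI : b ∈ I := hball (Metric.mem_ball.mpr (by
      rw [hb, Real.dist_eq, show m + ε / 2 - m = ε / 2 by ring,
        abs_of_pos (by linarith)]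
      linarith))
    have hbK : b ∉ K := by
      intro h
      have := hmub h
      rw [hb] at this
      linarith
    have hb0 : (0 : ℝ) ≤ b := by linarith
    have hsub : Icc 0 b ⊆ I := hIcc 0 hI0 b hbI
    have := aux_mvt_14 g 0 b C3 hb0
      (fun t ht => (hkey t (hsub ht)).1) (fun t ht => (hkey t (hsub ht)).2)
    have hgb : g b = 0 := hvanish b hbK
    have hbD : b ≤ D := le_trans (le_abs_self b) (hIbd b hbI)
    nlinarith [hC3.le]
  -- lower direction
  have hlower : -(C3 * D) ≤ g 0 := by
    obtain ⟨m, hmK, hmlb⟩ := hKcp.exists_isLeast hKne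
    have hm0 : m ≤ 0 := hmlb hK0
    obtain ⟨ε, hε, hball⟩ := Metric.isOpen_iff.mp hIopen m (hKI hmK)
    obtain ⟨a, ha⟩ : ∃ a : ℝ, a = m - ε / 2 := ⟨_, rfl⟩
    have haI : a ∈ I := hball (Metric.mem_ball.mpr (by
      rw [ha, Real.dist_eq, show m - ε / 2 - m = -(ε / 2) by ring, abs_neg,
        abs_of_pos (by linarith)]
      linarith))
    have haK : a ∉ K := by
      intro h
      have := hmlb h
      rw [ha] at this
      linarith
    have ha0 : a ≤ (0 : ℝ) := by linarith
    have hsub : Icc a 0 ⊆ I := hIcc a haI 0 hI0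
    have := aux_mvt_14 g a 0 C3 ha0
      (fun t ht => (hkey t (hsub ht)).1) (fun t ht => (hkey t (hsub ht)).2)
    have hga : g a = 0 := hvanish a haK
    have haD : -D ≤ a := neg_le_of_abs_le (hIbd a haI)
    nlinarith [hC3.le]
  rw [abs_le]
  exact ⟨hlower, hupper⟩
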